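/- For the function ζ(π) = ((μ-r)π - π²σ²/2)/ρ + (λ₀₁/(ρ+λ₁₀)) log(1 - g(π)^(1+λ₁₀/ρ)) + (λ₀₁/ρ) log(1 - πL) on [0,1), with g(π) = π(1-L)/(1-πL), if λ₀₁ = 0 the unique maximizer of ζ over [0,1] ∩ [0, ∞) is π̂ = (μ-r)/σ² (assuming 0 < (μ-r)/σ² < 1); and for λ₀₁ > 0 every maximizer π* of ζ satisfies π* < π̂. -/

import Mathlib

open Set Real

theorem stmt_6 (μ r σ ρ l10 L : ℝ) (hμ : r < μ) (hσ : 0 < σ) (hρ : 0 < ρ)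
    (hl10 : 0 ≤ l10) (hL : L ∈ Ico (0:ℝ) 1)
    (phat : ℝ) (hphat : phat = (μ - r)/σ^2) (hp : phat ∈ Ioo (0:ℝ) 1)
    (g : ℝ → ℝ) (hg : ∀ p, g p = p * (1-L) / (1 - p*L))
    (ζ : ℝ → ℝ → ℝ)
    (hζ : ∀ l01 p, ζ l01 p = ((μ-r)*p - p^2*σ^2/2)/ρ
        + (l01/(ρ+l10)) * Real.log (1 - (g p) ^ (1 + l10/ρ))
        + (l01/ρ) * Real.log (1 - p*L)) :
    (IsMaxOn (ζ 0) (Icc 0 1) phat ∧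
      (∀ p ∈ Icc (0:ℝ) 1, IsMaxOn (ζ 0) (Icc 0 1) p → p = phat)) ∧
    (∀ l01 > (0:ℝ), ∀ ps ∈ Ico (0:ℝ) 1, IsMaxOn (ζ l01) (Ico 0 1) ps → ps < phat) := by
  obtain ⟨hL0, hL1⟩ := hL
  obtain ⟨hp0, hp1⟩ := hp
  have hσ2 : (0:ℝ) < σ^2 := by positivity
  have hmr : μ - r = phat * σ^2 := by
    rw [hphat]; field_simp
  have hz0 : ∀ p, ζ 0 p = ((μ-r)*p - p^2*σ^2/2)/ρ := by
    intro p; rw [hζ]; simp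
  refine ⟨⟨?_, ?_⟩, ?_⟩
  · intro x hx
    simp only [mem_setOf_eq, hz0]
    rw [div_le_div_iff₀ hρ hρ]
    have key : ((μ-r)*phat - phat^2*σ^2/2)*ρ - ((μ-r)*x - x^2*σ^2/2)*ρ
        = σ^2*(x-phat)^2/2*ρ := by rw [hmr]; ring
    have pos : 0 ≤ σ^2*(x-phat)^2/2*ρ := by positivity
    linarith
  · intro p hpmem hmax
    have h1 := hmax (show phat ∈ Icc (0:ℝ) 1 from ⟨hp0.le, hp1.le⟩)
    simp only [mem_setOf_eq, hz0] at h1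
    rw [div_le_div_iff₀ hρ hρ] at h1
    have key : ((μ-r)*phat - phat^2*σ^2/2)*ρ - ((μ-r)*p - p^2*σ^2/2)*ρ
        = σ^2*(p-phat)^2/2*ρ := by rw [hmr]; ring
    have h2 : (p - phat)^2 ≤ 0 := by nlinarith [mul_pos hσ2 hρ]
    have h3 : (p - phat)^2 = 0 := le_antisymm h2 (sq_nonneg _)
    have h4 : p - phat = 0 := by
      exact sq_eq_zero_iff.mp h3
    linarith
  · intro l01 hl01 ps hps hmax
    by_contra hcon
    push_neg at hcon
    obtain ⟨hps0, hps1⟩ := hps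
    have hpspos : 0 < ps := lt_of_lt_of_le hp0 hcon
    have hd : 0 < 1 - ps * L := by nlinarith
    set α : ℝ := 1 + l10/ρ with hαdef
    have hα1 : (1:ℝ) ≤ α := by
      have := div_nonneg hl10 hρ.le; simp [hαdef]; linarith
    have hα0 : (0:ℝ) < α := by linarith
    have hgfun : g = fun p => p * (1-L) / (1 - p*L) := funext hg
    have hgpos : 0 < g ps := by
      rw [hg]; exact div_pos (by nlinarith) hd
    have hglt1 : g ps < 1 := by
      rw [hg, div_lt_one hd]; nlinarith
    have hga0 : 0 < g ps ^ α := Real.rpow_pos_of_pos hgpos α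
    have hga1 : g ps ^ α < 1 := Real.rpow_lt_one hgpos.le hglt1 hα0
    -- derivatives
    have h2 : HasDerivAt (fun p : ℝ => 1 - p*L) (-L) ps := by
      simpa using ((hasDerivAt_id ps).mul_const L).const_sub 1
    have hgd : HasDerivAt g ((1-L)/(1-ps*L)^2) ps := by
      rw [hgfun]
      have h1 : HasDerivAt (fun p : ℝ => p * (1-L)) (1-L) ps := by
        simpa using (hasDerivAt_id ps).mul_const (1-L)
      have := h1.div h2 hd.ne'
      refine this.congr_deriv ?_
      field_simp
      ring
    have hrp : HasDerivAt (fun p => g p ^ α)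
        ((1-L)/(1-ps*L)^2 * α * g ps ^ (α-1)) ps :=
      hgd.rpow_const (Or.inr hα1)
    have hin : HasDerivAt (fun p => 1 - g p ^ α)
        (-((1-L)/(1-ps*L)^2 * α * g ps ^ (α-1))) ps := hrp.const_sub 1
    have hne : 1 - g ps ^ α ≠ 0 := by linarith
    have hlog1 : HasDerivAt (fun p => Real.log (1 - g p ^ α))
        ((-((1-L)/(1-ps*L)^2 * α * g ps ^ (α-1)))/(1 - g ps ^ α)) ps := hin.log hne
    have hlog2 : HasDerivAt (fun p : ℝ => Real.log (1 - p*L)) ((-L)/(1-ps*L)) ps :=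
      h2.log hd.ne'
    have hquad : HasDerivAt (fun p : ℝ => ((μ-r)*p - p^2*σ^2/2)/ρ)
        (((μ-r) - ps*σ^2)/ρ) ps := by
      have ha : HasDerivAt (fun p : ℝ => (μ-r)*p - p^2*σ^2/2)
          ((μ-r) - ps*σ^2) ps := by
        have hb : HasDerivAt (fun p : ℝ => (μ-r)*p) (μ-r) ps := by
          simpa using (hasDerivAt_id ps).const_mul (μ-r)
        have hc : HasDerivAt (fun p : ℝ => p^2*σ^2/2) (ps*σ^2) ps := by
          have := ((hasDerivAt_pow 2 ps).mul_const (σ^2)).div_const 2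
          refine this.congr_deriv ?_
          ring
        exact hb.sub hc
      exact ha.div_const ρ
    set D : ℝ := ((μ-r) - ps*σ^2)/ρ
        + (l01/(ρ+l10)) * ((-((1-L)/(1-ps*L)^2 * α * g ps ^ (α-1)))/(1 - g ps ^ α))
        + (l01/ρ) * ((-L)/(1-ps*L)) with hD
    have hζder : HasDerivAt (ζ l01) D ps := by
      have hzf : ζ l01 = fun p => ((μ-r)*p - p^2*σ^2/2)/ρ
          + (l01/(ρ+l10)) * Real.log (1 - (g p) ^ α)
          + (l01/ρ) * Real.log (1 - p*L) := funext (hζ l01)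
      rw [hzf]
      exact (hquad.add (hlog1.const_mul (l01/(ρ+l10)))).add (hlog2.const_mul (l01/ρ))
    have hDneg : D < 0 := by
      have ht1 : ((μ-r) - ps*σ^2)/ρ ≤ 0 := by
        apply div_nonpos_of_nonpos_of_nonneg _ hρ.le
        nlinarith
      have hpl : 0 < ρ + l10 := by linarith
      have hgp1 : 0 < g ps ^ (α-1) := Real.rpow_pos_of_pos hgpos _
      have hnum : 0 < (1-L)/(1-ps*L)^2 * α * g ps ^ (α-1) :=
        mul_pos (mul_pos (div_pos (by linarith) (by positivity)) hα0) hgp1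
      have ht2 : (l01/(ρ+l10)) * ((-((1-L)/(1-ps*L)^2 * α * g ps ^ (α-1)))/(1 - g ps ^ α)) < 0 := by
        apply mul_neg_of_pos_of_neg (div_pos hl01 hpl)
        apply div_neg_of_neg_of_pos (by linarith) (by linarith)
      have ht3 : (l01/ρ) * ((-L)/(1-ps*L)) ≤ 0 := by
        apply mul_nonpos_of_nonneg_of_nonpos (div_pos hl01 hρ).le
        apply div_nonpos_of_nonpos_of_nonneg (by linarith) hd.le
      rw [hD]; linarith
    have hmem : Ico (0:ℝ) 1 ∈ nhds ps :=
      Filter.mem_of_superset (Ioo_mem_nhds hpspos hps1) Ioo_subset_Ico_self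
    have hloc : IsLocalMax (ζ l01) ps := hmax.isLocalMax hmem
    have := hloc.hasDerivAt_eq_zero hζder
    linarith
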